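/- Let T be a tree, P a longest path in T, and P* a central path of T of minimum length (i.e., a path of minimum eccentricity with fewest edges among such paths). Then V(P*) ⊆ V(P). -/

import Mathlib

open SimpleGraph

set_option linter.unusedSectionVars false
set_option maxHeartbeats 1000000

variable {V : Type*} [Fintype V] [DecidableEq V]

/-- Distance from a vertex `u` to the vertex set of a walk `P`. -/
noncomputable def walkDist (G : SimpleGraph V) {a b : V} (P : G.Walk a b) (u : V) : ℕ :=
  P.support.toFinset.inf' ⟨a, List.mem_toFinset.mpr P.start_mem_support⟩ (fun x => G.dist u x)

/-- Eccentricity of a walk: max distance from any vertex of `G` to the walk. -/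
noncomputable def eccW (G : SimpleGraph V) {a b : V} (P : G.Walk a b) : ℕ :=
  Finset.univ.sup (walkDist G P)

/-- Path eccentricity of a graph. -/
noncomputable def pe (G : SimpleGraph V) : ℕ :=
  sInf {m | ∃ (a b : V) (P : G.Walk a b), P.IsPath ∧ eccW G P = m}

/-- `P` is a longest path in `G`. -/
def IsLongestPath (G : SimpleGraph V) {a b : V} (P : G.Walk a b) : Prop :=
  P.IsPath ∧ ∀ (c d : V) (Q : G.Walk c d), Q.IsPath → Q.length ≤ P.length

/-- `G` is `k`-connected. -/
def KConnected (k : ℕ) (G : SimpleGraph V) : Prop :=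
  k + 1 ≤ Fintype.card V ∧
    ∀ S : Finset V, S.card < k → (G.induce ((↑S : Set V)ᶜ)).Connected

section TreeTools
variable {T : SimpleGraph V}

lemma tree_path_eq (hT : T.IsTree) {u v : V} {p q : T.Walk u v}
    (hp : p.IsPath) (hq : q.IsPath) : p = q :=
  (hT.existsUnique_path u v).unique hp hq

lemma exists_spath (hT : T.IsTree) (u v : V) :
    ∃ p : T.Walk u v, p.IsPath ∧ p.length = T.dist u v := by
  obtain ⟨q, hq⟩ := hT.isConnected.exists_walk_length_eq_dist u v
  refine ⟨q.bypass, q.bypass_isPath, le_antisymm ?_ (SimpleGraph.dist_le _)⟩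
  calc q.bypass.length ≤ q.length := q.length_bypass_le
    _ = T.dist u v := hq

lemma tree_len_eq_dist (hT : T.IsTree) {u v : V} {p : T.Walk u v} (hp : p.IsPath) :
    p.length = T.dist u v := by
  obtain ⟨q, hq, hlen⟩ := exists_spath hT u v
  rw [tree_path_eq hT hp hq, hlen]

lemma dist_getVert_le (hT : T.IsTree) {u v : V} (p : T.Walk u v) {i j : ℕ} (hij : i ≤ j) :
    T.dist (p.getVert i) (p.getVert j) ≤ j - i := by
  obtain ⟨k, rfl⟩ := Nat.exists_eq_add_of_le hij
  induction k with
  | zero => simp [SimpleGraph.dist_self]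
  | succ k ih =>
    have h1 : T.dist (p.getVert (i + k)) (p.getVert (i + (k+1))) ≤ 1 := by
      by_cases h : i + k < p.length
      · have hadj := p.adj_getVert_succ h
        have := SimpleGraph.dist_le (Walk.cons hadj Walk.nil)
        rw [← Nat.add_assoc]; simpa using this
      · push_neg at h
        rw [p.getVert_of_length_le h, p.getVert_of_length_le (by omega)]
        simp [SimpleGraph.dist_self]
    have h2 := hT.isConnected.dist_triangle (u := p.getVert i) (v := p.getVert (i+k))
      (w := p.getVert (i + (k+1)))
    omega

lemma tree_dist_getVert (hT : T.IsTree) {u v : V} {p : T.Walk u v} (hp : p.IsPath)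
    {i j : ℕ} (hij : i ≤ j) (hj : j ≤ p.length) :
    T.dist (p.getVert i) (p.getVert j) = j - i := by
  have hL : p.length = T.dist u v := tree_len_eq_dist hT hp
  have h1 : T.dist (p.getVert 0) (p.getVert i) ≤ i := by
    simpa using dist_getVert_le hT p (Nat.zero_le i)
  have h2 := dist_getVert_le hT p hij
  have h3 : T.dist (p.getVert j) (p.getVert p.length) ≤ p.length - j := by
    simpa using dist_getVert_le hT p hj
  rw [p.getVert_zero] at h1
  rw [p.getVert_length] at h3
  have t1 := hT.isConnected.dist_triangle (u := u) (v := p.getVert i) (w := v)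
  have t2 := hT.isConnected.dist_triangle (u := p.getVert i) (v := p.getVert j) (w := v)
  omega

lemma tree_split (hT : T.IsTree) {u v m : V} {p : T.Walk u v} (hp : p.IsPath)
    (hm : m ∈ p.support) : T.dist u m + T.dist m v = T.dist u v := by
  obtain ⟨i, rfl, hi⟩ := Walk.mem_support_iff_exists_getVert.mp hm
  have h1 : T.dist u (p.getVert i) = i := by
    have := tree_dist_getVert hT hp (Nat.zero_le i) hi
    simpa using this
  have h2 : T.dist (p.getVert i) v = p.length - i := by
    have := tree_dist_getVert hT hp hi (le_refl p.length)
    simpa using this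
  have h3 : p.length = T.dist u v := tree_len_eq_dist hT hp
  omega

lemma tree_adj_dist_one (hT : T.IsTree) {x y : V} (h : T.Adj x y) : T.dist x y = 1 := by
  have h1 : T.dist x y ≤ 1 := by
    have := SimpleGraph.dist_le (Walk.cons h Walk.nil)
    simpa using this
  have h2 : T.dist x y ≠ 0 := fun h0 => h.ne ((hT.isConnected.dist_eq_zero_iff).mp h0)
  omega

lemma tree_adj_dist (hT : T.IsTree) {x y : V} (z : V) (hadj : T.Adj x y) :
    T.dist z y = T.dist z x + 1 ∨ T.dist z x = T.dist z y + 1 := by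
  have hxy := tree_adj_dist_one hT hadj
  have h1 := hT.isConnected.dist_triangle (u := z) (v := x) (w := y)
  have h2 := hT.isConnected.dist_triangle (u := z) (v := y) (w := x)
  rw [SimpleGraph.dist_comm (u := y) (v := x)] at h2
  have hne : T.dist z x ≠ T.dist z y := by
    intro heq
    obtain ⟨q, hq, hqlen⟩ := exists_spath hT z x
    have hy : y ∉ q.support := by
      intro hy
      have := tree_split hT hq hy
      have hyx : T.dist y x = 1 := by
        rw [SimpleGraph.dist_comm (u := y) (v := x)]; exact tree_adj_dist_one hT hadj
      omega
    have hcpath : (q.concat hadj).IsPath := by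
      have hrev : (q.concat hadj).reverse = Walk.cons hadj.symm q.reverse := by
        simp [Walk.concat_eq_append]
      have : (q.concat hadj).reverse.IsPath := by
        rw [hrev]
        exact hq.reverse.cons (by simpa [Walk.support_reverse] using hy)
      simpa [Walk.concat_eq_append] using this.reverse
    have := tree_len_eq_dist hT hcpath
    rw [Walk.length_concat] at this
    omega
  omega

lemma tree_no_valley (hT : T.IsTree) {z x y x' : V} (h1 : T.Adj x y) (h2 : T.Adj y x')
    (hxx' : x ≠ x') (hd : T.dist z y = T.dist z x + 1) :
    T.dist z x' = T.dist z y + 1 := by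
  rcases tree_adj_dist hT z h2 with h | h
  · exact h
  · exfalso
    -- dist z x' = dist z y - 1 = dist z x
    have hx'x : T.dist z x' = T.dist z x := by omega
    set k := T.dist z x with hk
    obtain ⟨q, hq, hqlen⟩ := exists_spath hT z x
    obtain ⟨q', hq', hqlen'⟩ := exists_spath hT z x'
    have hy1 : y ∉ q.support := by
      intro hy
      have := tree_split hT hq hy
      have := tree_adj_dist_one hT h1.symm
      omega
    have hy2 : y ∉ q'.support := by
      intro hy
      have := tree_split hT hq' hy
      have := tree_adj_dist_one hT h2
      rw [SimpleGraph.dist_comm (u := y) (v := x')] at this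
      omega
    have hc1 : (q.concat h1).IsPath := by
      have hrev : (q.concat h1).reverse = Walk.cons h1.symm q.reverse := by
        simp [Walk.concat_eq_append]
      have : (q.concat h1).reverse.IsPath := by
        rw [hrev]; exact hq.reverse.cons (by simpa [Walk.support_reverse] using hy1)
      simpa [Walk.concat_eq_append] using this.reverse
    have hc2 : (q'.concat h2.symm).IsPath := by
      have hrev : (q'.concat h2.symm).reverse = Walk.cons h2 q'.reverse := by
        simp [Walk.concat_eq_append]
      have : (q'.concat h2.symm).reverse.IsPath := by
        rw [hrev]; exact hq'.reverse.cons (by simpa [Walk.support_reverse] using hy2)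
      simpa [Walk.concat_eq_append] using this.reverse
    have heq := tree_path_eq hT hc1 hc2
    have hxmem : x ∈ (q'.concat h2.symm).support := by
      rw [← heq, Walk.support_concat]
      simp [q.end_mem_support]
    rw [Walk.support_concat] at hxmem
    rcases (by simpa using hxmem : x ∈ q'.support ∨ x = y) with hx | hx
    · have hsp := tree_split hT hq' hx
      have hzero : T.dist x x' = 0 := by omega
      exact hxx' ((hT.isConnected.dist_eq_zero_iff).mp hzero)
    · exact h1.ne hx

lemma gate_aux (hT : T.IsTree) {x y : V} {p : T.Walk x y} (hp : p.IsPath) (z : V)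
    {j : ℕ} (hj : j ≤ p.length)
    (hmin : ∀ i ≤ p.length, T.dist z (p.getVert j) ≤ T.dist z (p.getVert i)) :
    ∀ k, j + k ≤ p.length →
      T.dist z (p.getVert (j + k)) = T.dist z (p.getVert j) + k := by
  intro k
  induction k using Nat.strong_induction_on with
  | _ k ih =>
    intro hk
    match k with
    | 0 => simp
    | 1 =>
      have hadj := p.adj_getVert_succ (show j < p.length by omega)
      rcases tree_adj_dist hT z hadj with h | h
      · simpa using h
      · have := hmin (j+1) (by omega)
        omega
    | (k+2) =>
      have h1 := ih (k+1) (by omega) (by omega)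
      have h2 := ih k (by omega) (by omega)
      have hadj1 : T.Adj (p.getVert (j+k)) (p.getVert (j+k+1)) :=
        p.adj_getVert_succ (by omega)
      have hadj2 : T.Adj (p.getVert (j+k+1)) (p.getVert (j+k+2)) :=
        p.adj_getVert_succ (by omega)
      have hne : p.getVert (j+k) ≠ p.getVert (j+k+2) := by
        intro he
        have := tree_dist_getVert hT hp (show j+k ≤ j+k+2 by omega) (by omega)
        rw [he, SimpleGraph.dist_self] at this
        omega
      have e1 : j + (k+1) = j + k + 1 := by omega
      have e2 : j + (k+2) = j + k + 2 := by omega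
      rw [e1] at h1
      have := tree_no_valley hT hadj1 hadj2 hne
        (show T.dist z (p.getVert (j+k+1)) = T.dist z (p.getVert (j+k)) + 1 by omega)
      rw [e2]
      omega

lemma tree_gate (hT : T.IsTree) {x y : V} {p : T.Walk x y} (hp : p.IsPath) (z : V) :
    ∃ g ∈ p.support, ∀ q ∈ p.support, T.dist z q = T.dist z g + T.dist g q := by
  obtain ⟨j, hjmem, hjmin⟩ := Finset.exists_min_image (Finset.range (p.length + 1))
    (fun i => T.dist z (p.getVert i)) ⟨0, by simp⟩
  simp only [Finset.mem_range] at hjmem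
  have hj : j ≤ p.length := by omega
  have hmin : ∀ i ≤ p.length, T.dist z (p.getVert j) ≤ T.dist z (p.getVert i) := by
    intro i hi
    exact hjmin i (Finset.mem_range.mpr (by omega))
  refine ⟨p.getVert j, Walk.mem_support_iff_exists_getVert.mpr ⟨j, rfl, hj⟩, ?_⟩
  intro q hq
  obtain ⟨i, rfl, hi⟩ := Walk.mem_support_iff_exists_getVert.mp hq
  rcases le_or_gt j i with hji | hij
  · have := gate_aux hT hp z hj hmin (i - j) (by omega)
    have he : j + (i - j) = i := by omega
    rw [he] at this
    rw [tree_dist_getVert hT hp hji hi]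
    omega
  · -- use the reversed walk
    have hrid : ∀ m, m ≤ p.length → p.reverse.getVert (p.length - m) = p.getVert m := by
      intro m hm
      rw [p.getVert_reverse]
      congr 1
      omega
    have hlenr : p.reverse.length = p.length := p.length_reverse
    have hminr : ∀ i' ≤ p.reverse.length,
        T.dist z (p.reverse.getVert (p.length - j)) ≤ T.dist z (p.reverse.getVert i') := by
      intro i' hi'
      rw [hrid j hj, p.getVert_reverse]
      exact hmin (p.length - i') (by omega)
    have := gate_aux hT hp.reverse z (j := p.length - j) (by omega) hminr
      ((p.length - i) - (p.length - j)) (by omega)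
    have he : p.length - j + ((p.length - i) - (p.length - j)) = p.length - i := by omega
    rw [he, hrid i (by omega), hrid j hj] at this
    rw [SimpleGraph.dist_comm (u := p.getVert j) (v := p.getVert i),
      tree_dist_getVert hT hp (le_of_lt hij) hj]
    omega

lemma step_exists (hT : T.IsTree) {x y : V} (h : x ≠ y) :
    ∃ n, T.Adj x n ∧ T.dist n y + 1 = T.dist x y := by
  obtain ⟨p, hp, hlen⟩ := exists_spath hT x y
  have hpos : 0 < p.length := by
    rcases Nat.eq_zero_or_pos p.length with h0 | h0
    · exfalso
      rw [hlen] at h0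
      exact h ((hT.isConnected.dist_eq_zero_iff).mp h0)
    · exact h0
  refine ⟨p.getVert 1, ?_, ?_⟩
  · have h2 := p.adj_getVert_succ hpos
    rw [p.getVert_zero] at h2
    exact h2
  · have := tree_dist_getVert hT hp (show 1 ≤ p.length from hpos) (le_refl _)
    rw [p.getVert_length] at this
    omega


lemma step_unique (hT : T.IsTree) {x y n n' : V} (h1 : T.Adj x n)
    (h2 : T.dist n y + 1 = T.dist x y) (h1' : T.Adj x n')
    (h2' : T.dist n' y + 1 = T.dist x y) : n = n' := by
  obtain ⟨q, hq, hqlen⟩ := exists_spath hT n y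
  obtain ⟨q', hq', hqlen'⟩ := exists_spath hT n' y
  have hx1 : x ∉ q.support := by
    intro hx
    have := tree_split hT hq hx
    have hnx : T.dist n x = 1 := by
      rw [SimpleGraph.dist_comm (u := n) (v := x)]
      exact tree_adj_dist_one hT h1
    omega
  have hx2 : x ∉ q'.support := by
    intro hx
    have := tree_split hT hq' hx
    have hnx : T.dist n' x = 1 := by
      rw [SimpleGraph.dist_comm (u := n') (v := x)]
      exact tree_adj_dist_one hT h1'
    omega
  have hc1 : (Walk.cons h1 q).IsPath := hq.cons hx1
  have hc2 : (Walk.cons h1' q').IsPath := hq'.cons hx2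
  have heq := tree_path_eq hT hc1 hc2
  have : (Walk.cons h1 q).getVert 1 = (Walk.cons h1' q').getVert 1 := by rw [heq]
  simpa [Walk.getVert_cons q h1 one_ne_zero, Walk.getVert_cons q' h1' one_ne_zero] using this

lemma tree_core (hT : T.IsTree) {delta x : V} (y : V) (hx : x ≠ delta) :
    T.dist x y = T.dist x delta + T.dist delta y ∨
    ∃ n, T.Adj delta n ∧ T.dist n x + 1 = T.dist delta x ∧
      T.dist n y + 1 = T.dist delta y := by
  obtain ⟨p, hp, hlen⟩ := exists_spath hT delta x
  have hpos : 0 < p.length := by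
    rcases Nat.eq_zero_or_pos p.length with h0 | h0
    · exfalso
      rw [hlen] at h0
      exact hx (((hT.isConnected.dist_eq_zero_iff).mp
        (by rw [SimpleGraph.dist_comm (u := x) (v := delta)]; exact h0)).symm ▸ rfl)
    · exact h0
  obtain ⟨g, hg, hgate⟩ := tree_gate hT hp y
  by_cases hgd : g = delta
  · left
    have := hgate x p.end_mem_support
    rw [hgd] at this
    rw [SimpleGraph.dist_comm (u := x) (v := y), this,
      SimpleGraph.dist_comm (u := y) (v := delta), SimpleGraph.dist_comm (u := delta) (v := x)]
    omega
  · right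
    obtain ⟨j, rfl, hj⟩ := Walk.mem_support_iff_exists_getVert.mp hg
    have hjpos : 0 < j := by
      rcases Nat.eq_zero_or_pos j with h0 | h0
      · exfalso; apply hgd; rw [h0, p.getVert_zero]
      · exact h0
    refine ⟨p.getVert 1, ?_, ?_, ?_⟩
    · have h2 := p.adj_getVert_succ hpos
      rw [p.getVert_zero] at h2
      exact h2
    · have := tree_dist_getVert hT hp (show 1 ≤ p.length from hpos) (le_refl _)
      rw [p.getVert_length] at this
      omega
    · have hn : p.getVert 1 ∈ p.support :=
        Walk.mem_support_iff_exists_getVert.mpr ⟨1, rfl, hpos⟩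
      have hd : delta ∈ p.support := by
        have := p.start_mem_support
        exact this
      have e1 := hgate (p.getVert 1) hn
      have e2 := hgate delta (by simpa using p.start_mem_support)
      have e3 : T.dist (p.getVert j) (p.getVert 1) = j - 1 := by
        rw [SimpleGraph.dist_comm (u := p.getVert j) (v := p.getVert 1)]
        exact tree_dist_getVert hT hp hjpos hj
      have e4 : T.dist (p.getVert j) delta = j := by
        rw [SimpleGraph.dist_comm (u := p.getVert j) (v := delta)]
        have := tree_dist_getVert hT hp (Nat.zero_le j) hj
        simpa using this
      rw [SimpleGraph.dist_comm (u := p.getVert 1) (v := y),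
        SimpleGraph.dist_comm (u := delta) (v := y)]
      rw [e3] at e1
      rw [e4] at e2
      omega

lemma tree_convex (hT : T.IsTree) {x y pa pb : V} {W : T.Walk x y} (hW : W.IsPath)
    {p : T.Walk pa pb} (hp : p.IsPath) (hx : x ∈ p.support) (hy : y ∈ p.support) :
    ∀ v ∈ W.support, v ∈ p.support := by
  by_cases hy' : y ∈ (p.dropUntil x hx).support
  · have hW' : ((p.dropUntil x hx).takeUntil y hy').IsPath :=
      (hp.dropUntil hx).takeUntil hy'
    have heq := tree_path_eq hT hW hW'
    intro v hv
    rw [heq] at hv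
    exact (p.support_dropUntil_subset hx) ((Walk.support_takeUntil_subset _ hy') hv)
  · have hy'' : y ∈ (p.takeUntil x hx).support := by
      have := p.take_spec hx
      have hmem : y ∈ ((p.takeUntil x hx).append (p.dropUntil x hx)).support := by
        rw [this]; exact hy
      rcases (Walk.mem_support_append_iff _ _).mp hmem with h | h
      · exact h
      · exact absurd h hy'
    have hW' : (((p.takeUntil x hx).dropUntil y hy'').reverse).IsPath :=
      ((hp.takeUntil hx).dropUntil hy'').reverse
    have heq := tree_path_eq hT hW hW'
    intro v hv
    rw [heq] at hv
    rw [Walk.support_reverse] at hv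
    exact (p.support_takeUntil_subset hx)
      ((Walk.support_dropUntil_subset _ hy'') (List.mem_reverse.mp hv))

end TreeTools

section EccAPI
variable {T : SimpleGraph V}

lemma walkDist_le {a b : V} (P : T.Walk a b) {u q : V} (hq : q ∈ P.support) :
    walkDist T P u ≤ T.dist u q :=
  Finset.inf'_le _ (List.mem_toFinset.mpr hq)

lemma walkDist_exists {a b : V} (P : T.Walk a b) (u : V) :
    ∃ q ∈ P.support, walkDist T P u = T.dist u q := by
  obtain ⟨q, hq, he⟩ := Finset.exists_mem_eq_inf'
    (s := P.support.toFinset) ⟨a, List.mem_toFinset.mpr P.start_mem_support⟩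
    (fun x => T.dist u x)
  exact ⟨q, List.mem_toFinset.mp hq, he⟩

lemma walkDist_le_eccW {a b : V} (P : T.Walk a b) (u : V) :
    walkDist T P u ≤ eccW T P :=
  Finset.le_sup (Finset.mem_univ u)

lemma eccW_exists {a b : V} (P : T.Walk a b) :
    ∃ u, eccW T P = walkDist T P u := by
  have : Nonempty V := ⟨a⟩
  obtain ⟨u, _, he⟩ := Finset.exists_mem_eq_sup (Finset.univ : Finset V)
    Finset.univ_nonempty (walkDist T P)
  exact ⟨u, he⟩

lemma pe_le {e f : V} (Q : T.Walk e f) (hQ : Q.IsPath) : pe T ≤ eccW T Q :=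
  Nat.sInf_le ⟨e, f, Q, hQ, rfl⟩

lemma walkDist_congr {a b c d : V} {P : T.Walk a b} {Q : T.Walk c d}
    (h : ∀ v, v ∈ P.support ↔ v ∈ Q.support) (u : V) :
    walkDist T P u = walkDist T Q u := by
  apply le_antisymm
  · obtain ⟨q, hq, he⟩ := walkDist_exists Q u
    rw [he]
    exact walkDist_le P ((h q).mpr hq)
  · obtain ⟨q, hq, he⟩ := walkDist_exists P u
    rw [he]
    exact walkDist_le Q ((h q).mp hq)

lemma eccW_reverse {a b : V} (P : T.Walk a b) : eccW T P.reverse = eccW T P := by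
  unfold eccW
  apply Finset.sup_congr rfl
  intro u _
  exact walkDist_congr (fun v => by simp [Walk.support_reverse]) u

end EccAPI

section Main
variable {T : SimpleGraph V}

lemma longest_central (hT : T.IsTree) {a b : V} {P : T.Walk a b} (hP : IsLongestPath T P)
    {c d : V} {Ps : T.Walk c d} (hPs : Ps.IsPath) (z : V) :
    ∃ p ∈ P.support, T.dist z p ≤ eccW T Ps := by
  by_contra hcon
  push_neg at hcon
  set r := eccW T Ps with hr
  -- gate of z on P
  obtain ⟨g, hg, hgate⟩ := tree_gate hT hP.1 z
  obtain ⟨j, rfl, hj⟩ := Walk.mem_support_iff_exists_getVert.mp hg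
  set L := P.length with hL
  have hdab : T.dist a b = L := (tree_len_eq_dist hT hP.1).symm
  have hga : T.dist (P.getVert j) a = j := by
    rw [SimpleGraph.dist_comm (u := P.getVert j) (v := a)]
    have := tree_dist_getVert hT hP.1 (Nat.zero_le j) hj
    simpa using this
  have hgb : T.dist (P.getVert j) b = L - j := by
    have := tree_dist_getVert hT hP.1 hj (le_refl P.length)
    rw [P.getVert_length] at this
    exact this
  set t := T.dist z (P.getVert j) with ht
  have htr : r + 1 ≤ t := hcon _ hg
  have hza : T.dist z a = t + j := by
    rw [hgate a P.start_mem_support, hga]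
  have hzb : T.dist z b = t + (L - j) := by
    rw [hgate b P.end_mem_support, hgb]
  have hzaL : T.dist z a ≤ L := by
    obtain ⟨q, hq, hqlen⟩ := exists_spath hT z a
    rw [← hqlen]; exact hP.2 _ _ q hq
  have hzbL : T.dist z b ≤ L := by
    obtain ⟨q, hq, hqlen⟩ := exists_spath hT z b
    rw [← hqlen]; exact hP.2 _ _ q hq
  have htj : t ≤ j := by omega
  have htj' : t ≤ L - j := by omega
  have hjL : j ≤ L := hj
  -- witnesses on Ps for a, b, z
  have hwit : ∀ x : V, ∃ q ∈ Ps.support, T.dist x q ≤ r := by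
    intro x
    obtain ⟨q, hq, he⟩ := walkDist_exists Ps x
    exact ⟨q, hq, he ▸ walkDist_le_eccW Ps x⟩
  obtain ⟨qa, hqa, hqa'⟩ := hwit a
  obtain ⟨qb, hqb, hqb'⟩ := hwit b
  obtain ⟨qz, hqz, hqz'⟩ := hwit z
  -- each of a, b, z differs from g and has a "step" towards its witness
  have hstep : ∀ x qx : V, qx ∈ Ps.support → T.dist x qx ≤ r →
      T.dist x (P.getVert j) ≥ r + 1 →
      ∃ n, T.Adj (P.getVert j) n ∧ T.dist n x + 1 = T.dist (P.getVert j) x ∧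
        T.dist n qx + 1 = T.dist (P.getVert j) qx := by
    intro x qx hqx hle hge
    have hxg : x ≠ P.getVert j := by
      intro he
      rw [he, SimpleGraph.dist_self] at hge
      omega
    rcases tree_core hT (delta := P.getVert j) (x := x) qx hxg with h | h
    · exfalso
      have htri : T.dist x (P.getVert j) ≤ T.dist x qx + T.dist qx (P.getVert j) := by
        have := hT.isConnected.dist_triangle (u := x) (v := qx) (w := P.getVert j)
        exact this
      have : T.dist x (P.getVert j) = T.dist (P.getVert j) x := by
        rw [SimpleGraph.dist_comm (u := x) (v := P.getVert j)]
      omega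
    · exact h
  have hdga : T.dist (P.getVert j) a ≥ r + 1 := by omega
  have hdgb : T.dist (P.getVert j) b ≥ r + 1 := by omega
  have hdgz : T.dist (P.getVert j) z ≥ r + 1 := by
    rw [SimpleGraph.dist_comm (u := P.getVert j) (v := z)]
    omega
  obtain ⟨na, hna, hna1, hna2⟩ := hstep a qa hqa hqa' (by
    rw [SimpleGraph.dist_comm (u := a) (v := P.getVert j)]; omega)
  obtain ⟨nb, hnb, hnb1, hnb2⟩ := hstep b qb hqb hqb' (by
    rw [SimpleGraph.dist_comm (u := b) (v := P.getVert j)]; omega)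
  obtain ⟨nz, hnz, hnz1, hnz2⟩ := hstep z qz hqz hqz' (by
    rw [SimpleGraph.dist_comm (u := z) (v := P.getVert j)]; omega)
  have cz : T.dist (P.getVert j) z = T.dist z (P.getVert j) :=
    SimpleGraph.dist_comm ..
  -- distinctness of the three step vertices
  have hab : na ≠ nb := by
    intro he
    have t1 := hT.isConnected.dist_triangle (u := a) (v := na) (w := b)
    have c1 : T.dist a na = T.dist na a := SimpleGraph.dist_comm ..
    have c2 : T.dist na b = T.dist nb b := by rw [he]
    omega
  have haz : na ≠ nz := by
    intro he
    have t1 := hT.isConnected.dist_triangle (u := z) (v := nz) (w := a)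
    have c1 : T.dist z nz = T.dist nz z := SimpleGraph.dist_comm ..
    have c2 : T.dist nz a = T.dist na a := by rw [he]
    omega
  have hbz : nb ≠ nz := by
    intro he
    have t1 := hT.isConnected.dist_triangle (u := z) (v := nz) (w := b)
    have c1 : T.dist z nz = T.dist nz z := SimpleGraph.dist_comm ..
    have c2 : T.dist nz b = T.dist nb b := by rw [he]
    omega
  by_cases hgPs : P.getVert j ∈ Ps.support
  · -- two directions along Ps
    obtain ⟨j', hj'eq, hj'⟩ := Walk.mem_support_iff_exists_getVert.mp hgPs
    have htwo : ∀ qx n : V, qx ∈ Ps.support →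
        T.Adj (P.getVert j) n → T.dist n qx + 1 = T.dist (P.getVert j) qx →
        n = Ps.getVert (j' + 1) ∨ n = Ps.getVert (j' - 1) := by
      intro qx n hqx hadj hstepn
      obtain ⟨i, rfl, hi⟩ := Walk.mem_support_iff_exists_getVert.mp hqx
      have hij' : i ≠ j' := by
        intro he
        have : T.dist (P.getVert j) (Ps.getVert i) = 0 := by
          rw [he, hj'eq, SimpleGraph.dist_self]
        omega
      rcases lt_or_gt_of_ne hij' with hlt | hgt
      · right
        have hadj2 : T.Adj (Ps.getVert (j' - 1)) (Ps.getVert j') := by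
          have := Ps.adj_getVert_succ (show j' - 1 < Ps.length by omega)
          have he : j' - 1 + 1 = j' := by omega
          rwa [he] at this
        have hd1 : T.dist (Ps.getVert (j' - 1)) (Ps.getVert i) + 1
            = T.dist (P.getVert j) (Ps.getVert i) := by
          rw [← hj'eq]
          have e1 : T.dist (Ps.getVert i) (Ps.getVert (j' - 1)) = j' - 1 - i :=
            tree_dist_getVert hT hPs (by omega) (by omega)
          have e2 : T.dist (Ps.getVert i) (Ps.getVert j') = j' - i :=
            tree_dist_getVert hT hPs (by omega) (by omega)
          rw [SimpleGraph.dist_comm (u := Ps.getVert (j'-1)) (v := Ps.getVert i),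
            SimpleGraph.dist_comm (u := Ps.getVert j') (v := Ps.getVert i), e1, e2]
          omega
        have hadj2' : T.Adj (P.getVert j) (Ps.getVert (j' - 1)) := by
          rw [← hj'eq]
          exact hadj2.symm
        exact step_unique hT hadj hstepn hadj2' hd1
      · left
        have hj'lt : j' < Ps.length := by omega
        have hadj2 : T.Adj (P.getVert j) (Ps.getVert (j' + 1)) := by
          rw [← hj'eq]
          exact Ps.adj_getVert_succ hj'lt
        have hd1 : T.dist (Ps.getVert (j' + 1)) (Ps.getVert i) + 1
            = T.dist (P.getVert j) (Ps.getVert i) := by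
          rw [← hj'eq]
          have e1 : T.dist (Ps.getVert (j' + 1)) (Ps.getVert i) = i - (j' + 1) :=
            tree_dist_getVert hT hPs (by omega) (by omega)
          have e2 : T.dist (Ps.getVert j') (Ps.getVert i) = i - j' :=
            tree_dist_getVert hT hPs (by omega) (by omega)
          rw [e1, e2]
          omega
        exact step_unique hT hadj hstepn hadj2 hd1
    have ha' := htwo qa na hqa hna hna2
    have hb' := htwo qb nb hqb hnb hnb2
    have hz' := htwo qz nz hqz hnz hnz2
    rcases ha' with h1 | h1 <;> rcases hb' with h2 | h2 <;> rcases hz' with h3 | h3 <;>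
      first
        | exact hab (h1.trans h2.symm)
        | exact haz (h1.trans h3.symm)
        | exact hbz (h2.trans h3.symm)
  · -- one direction: towards the gate of g on Ps
    obtain ⟨h, hh, hgh⟩ := tree_gate hT hPs (P.getVert j)
    have hgh' : P.getVert j ≠ h := by
      intro he
      exact hgPs (he ▸ hh)
    obtain ⟨n0, hn0, hn0'⟩ := step_exists hT hgh'
    have honedir : ∀ qx n : V, qx ∈ Ps.support →
        T.Adj (P.getVert j) n → T.dist n qx + 1 = T.dist (P.getVert j) qx →
        n = n0 := by
      intro qx n hqx hadj hstepn
      have hstep0 : T.dist n0 qx + 1 = T.dist (P.getVert j) qx := by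
        have t1 := hT.isConnected.dist_triangle (u := n0) (v := h) (w := qx)
        have t2 := hT.isConnected.dist_triangle (u := P.getVert j) (v := n0) (w := qx)
        have t3 : T.dist (P.getVert j) n0 = 1 := tree_adj_dist_one hT hn0
        have e1 := hgh qx hqx
        omega
      exact step_unique hT hadj hstepn hn0 hstep0
    exact hab ((honedir qa na hqa hna hna2).trans (honedir qb nb hqb hnb hnb2).symm)

lemma endpoint_mem (hT : T.IsTree) {a b c d : V} {P : T.Walk a b} (hP : IsLongestPath T P)
    {Ps : T.Walk c d} (hPs : Ps.IsPath) (hcen : eccW T Ps = pe T)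
    (hmin : ∀ (e f : V) (Q : T.Walk e f), Q.IsPath → eccW T Q = pe T →
      Ps.length ≤ Q.length)
    (hlen : 1 ≤ Ps.length) (hr1 : 1 ≤ pe T) : d ∈ P.support := by
  by_contra hdP
  set r := pe T with hrdef
  set ℓ := Ps.length with hldef
  have hdcd : T.dist c d = ℓ := (tree_len_eq_dist hT hPs).symm ▸ rfl
  -- the neighbor d' of d on Ps
  set d' := Ps.getVert (ℓ - 1) with hd'def
  have hcd' : T.dist c d' = ℓ - 1 := by
    have := tree_dist_getVert hT hPs (Nat.zero_le (ℓ-1)) (show ℓ - 1 ≤ Ps.length by omega)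
    simpa using this
  have hdd' : T.dist d d' = 1 := by
    have := tree_dist_getVert hT hPs (show ℓ - 1 ≤ Ps.length by omega) (le_refl _)
    rw [Ps.getVert_length] at this
    rw [SimpleGraph.dist_comm (u := d) (v := d')]
    rw [this]
    omega
  have hAdj : T.Adj d d' := by
    have h1 := Ps.adj_getVert_succ (show ℓ - 1 < Ps.length by omega)
    have he : ℓ - 1 + 1 = ℓ := by omega
    rw [he] at h1
    rw [show Ps.getVert ℓ = d from by rw [hldef]; exact Ps.getVert_length] at h1
    exact h1.symm
  have hd'mem : d' ∈ Ps.support := Walk.mem_support_iff_exists_getVert.mpr ⟨ℓ-1, rfl, by omega⟩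
  have hd'ne : d' ≠ d := by
    intro he
    rw [he, SimpleGraph.dist_self] at hdd'
    omega
  have hdc : c ≠ d := by
    intro he
    rw [he, SimpleGraph.dist_self] at hdcd
    omega
  -- witness w beyond d
  have hRnil : ¬Ps.reverse.Nil := by
    rw [Walk.not_nil_iff_lt_length, Walk.length_reverse]
    omega
  set R' := Ps.reverse.tail with hR'def
  have hR'path : R'.IsPath := hPs.reverse.tail
  have hR'len : R'.length + 1 = ℓ := by
    have := Walk.length_tail_add_one hRnil
    rw [Walk.length_reverse] at this
    rw [← hR'def] at this
    omega
  have hR'supp : ∀ q, q ∈ Ps.support → q ≠ d → q ∈ R'.support := by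
    intro q hq hqd
    have h1 : q ∈ Ps.reverse.support := by
      rw [Walk.support_reverse]; exact List.mem_reverse.mpr hq
    rw [Walk.support_eq_cons Ps.reverse] at h1
    rcases List.mem_cons.mp h1 with h | h
    · exact absurd h hqd
    · rw [hR'def, Walk.support_tail_of_not_nil _ hRnil]; exact h
  have hR'high : r + 1 ≤ eccW T R' := by
    have h1 : r ≤ eccW T R' := pe_le R' hR'path
    have h2 : eccW T R' ≠ r := by
      intro he
      have := hmin _ _ R' hR'path (by rw [he])
      omega
    omega
  obtain ⟨w, hwsup⟩ := eccW_exists R'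
  have hw1 : ∀ q ∈ R'.support, r + 1 ≤ T.dist w q := by
    intro q hq
    calc r + 1 ≤ walkDist T R' w := by omega
      _ ≤ T.dist w q := walkDist_le R' hq
  have hw2 : T.dist w d ≤ r := by
    obtain ⟨q0, hq0, he0⟩ := walkDist_exists Ps w
    have hle : T.dist w q0 ≤ r := by
      rw [← he0, ← hcen]
      exact walkDist_le_eccW Ps w
    by_cases hq0d : q0 = d
    · rwa [hq0d] at hle
    · exact absurd hle (by have := hw1 q0 (hR'supp q0 hq0 hq0d); omega)
  -- witness u beyond c
  have hSnil : ¬Ps.Nil := by rw [Walk.not_nil_iff_lt_length]; omega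
  set S := Ps.tail with hSdef
  have hSpath : S.IsPath := hPs.tail
  have hSlen : S.length + 1 = ℓ := Walk.length_tail_add_one hSnil
  have hSsupp : ∀ q, q ∈ Ps.support → q ≠ c → q ∈ S.support := by
    intro q hq hqc
    have h1 : q ∈ Ps.support := hq
    rw [Walk.support_eq_cons Ps] at h1
    rcases List.mem_cons.mp h1 with h | h
    · exact absurd h hqc
    · rw [hSdef, Walk.support_tail_of_not_nil _ hSnil]; exact h
  have hShigh : r + 1 ≤ eccW T S := by
    have h1 : r ≤ eccW T S := pe_le S hSpath
    have h2 : eccW T S ≠ r := by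
      intro he
      have := hmin _ _ S hSpath (by rw [he])
      omega
    omega
  obtain ⟨u, husup⟩ := eccW_exists S
  have hu1 : ∀ q ∈ S.support, r + 1 ≤ T.dist u q := by
    intro q hq
    calc r + 1 ≤ walkDist T S u := by omega
      _ ≤ T.dist u q := walkDist_le S hq
  have hu2 : T.dist u c ≤ r := by
    obtain ⟨q0, hq0, he0⟩ := walkDist_exists Ps u
    have hle : T.dist u q0 ≤ r := by
      rw [← he0, ← hcen]
      exact walkDist_le_eccW Ps u
    by_cases hq0c : q0 = c
    · rwa [hq0c] at hle
    · exact absurd hle (by have := hu1 q0 (hSsupp q0 hq0 hq0c); omega)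
  -- key distance facts
  have hud : r + 1 ≤ T.dist u d :=
    hu1 d (hSsupp d Ps.end_mem_support (Ne.symm hdc))
  have hwd' : r + 1 ≤ T.dist w d' :=
    hw1 d' (hR'supp d' hd'mem hd'ne)
  have hwd : r ≤ T.dist w d := by
    have t1 := hT.isConnected.dist_triangle (u := w) (v := d) (w := d')
    omega
  have hwned : w ≠ d := by
    intro he
    rw [he] at hwd'
    omega
  have huned : u ≠ d := by
    intro he
    rw [he, SimpleGraph.dist_self] at hud
    omega
  -- points on P near u and w
  obtain ⟨pw, hpwP, hpw⟩ := longest_central hT hP hPs w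
  obtain ⟨pu, hpuP, hpu⟩ := longest_central hT hP hPs u
  rw [hcen] at hpw hpu
  have hdp : ∀ p ∈ P.support, 1 ≤ T.dist d p := by
    intro p hp
    rcases Nat.eq_zero_or_pos (T.dist d p) with h0 | h0
    · exact absurd ((hT.isConnected.dist_eq_zero_iff).mp h0 ▸ hp) hdP
    · exact h0
  have hdpw := hdp pw hpwP
  have hdpu := hdp pu hpuP
  have hpune : pu ≠ d := by
    intro he; rw [he, SimpleGraph.dist_self] at hdpu; omega
  -- comm facts
  have cdu : T.dist d u = T.dist u d := SimpleGraph.dist_comm ..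
  have cdw : T.dist d w = T.dist w d := SimpleGraph.dist_comm ..
  have cdc : T.dist d c = T.dist c d := SimpleGraph.dist_comm ..
  have cd'c : T.dist d' c = T.dist c d' := SimpleGraph.dist_comm ..
  -- core (1) pivot d on (u, c): step of u at d is d'
  have step1 : T.dist d' u + 1 = T.dist d u := by
    rcases tree_core hT (delta := d) (x := u) c huned with h | h
    · exfalso; omega
    · obtain ⟨n, hn, hn1, hn2⟩ := h
      have hnd' : n = d' := step_unique hT hn hn2 hAdj (by omega)
      rw [← hnd']
      omega
  -- core (2) pivot d on (u, pu): step towards pu is also d'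
  have step2 : T.dist d' pu + 1 = T.dist d pu := by
    rcases tree_core hT (delta := d) (x := u) pu huned with h | h
    · exfalso
      have cupu : T.dist u pu = T.dist pu u := SimpleGraph.dist_comm ..
      omega
    · obtain ⟨n, hn, hn1, hn2⟩ := h
      have hnd' : n = d' := step_unique hT hn hn1 hAdj (by omega)
      rw [← hnd']
      omega
  -- core (3) pivot d on (w, pw)
  obtain ⟨nw, hnw, hnw1, hnw2⟩ : ∃ n, T.Adj d n ∧ T.dist n w + 1 = T.dist d w ∧
      T.dist n pw + 1 = T.dist d pw := by
    rcases tree_core hT (delta := d) (x := w) pw hwned with h | h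
    · exfalso
      have cwpw : T.dist w pw = T.dist pw w := SimpleGraph.dist_comm ..
      omega
    · exact h
  have hnwne : nw ≠ d' := by
    intro he
    rw [he] at hnw1
    have : T.dist d' w = T.dist w d' := SimpleGraph.dist_comm ..
    omega
  -- core (4) pivot d on (pu, pw)
  obtain ⟨n2, hn2a, hn2u, hn2w⟩ : ∃ n, T.Adj d n ∧ T.dist n pu + 1 = T.dist d pu ∧
      T.dist n pw + 1 = T.dist d pw := by
    rcases tree_core hT (delta := d) (x := pu) pw hpune with h | h
    · exfalso
      obtain ⟨g2, hg2, hgate2⟩ := tree_gate hT hP.1 d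
      have hs : 1 ≤ T.dist d g2 := hdp g2 hg2
      have e1 := hgate2 pu hpuP
      have e2 := hgate2 pw hpwP
      have t1 := hT.isConnected.dist_triangle (u := pu) (v := g2) (w := pw)
      have c1 : T.dist pu g2 = T.dist g2 pu := SimpleGraph.dist_comm ..
      have c2 : T.dist pu d = T.dist d pu := SimpleGraph.dist_comm ..
      omega
    · exact h
  have e1 : n2 = d' := step_unique hT hn2a hn2u hAdj (by omega)
  have e2 : n2 = nw := step_unique hT hn2a hn2w hnw hnw2
  exact hnwne (e2 ▸ e1)

lemma center_mem (hT : T.IsTree) {a b c d : V} {P : T.Walk a b} (hP : IsLongestPath T P)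
    {Ps : T.Walk c d} (hPs : Ps.IsPath) (hcen : eccW T Ps = pe T)
    (hlen : Ps.length = 0) (hr1 : 1 ≤ pe T) : c ∈ P.support := by
  by_contra hcP
  set r := pe T with hrdef
  set L := P.length with hLdef
  have hwdc : ∀ x, walkDist T Ps x = T.dist x c := by
    intro x
    obtain ⟨q, hq, he⟩ := walkDist_exists Ps x
    obtain ⟨i, rfl, hi⟩ := Walk.mem_support_iff_exists_getVert.mp hq
    have hi0 : i = 0 := by omega
    rw [hi0, Ps.getVert_zero] at he
    exact he
  have hac : T.dist a c ≤ r := by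
    rw [← hwdc a, ← hcen]
    exact walkDist_le_eccW Ps a
  have hbc : T.dist b c ≤ r := by
    rw [← hwdc b, ← hcen]
    exact walkDist_le_eccW Ps b
  -- gate of c on P
  obtain ⟨g, hg, hgate⟩ := tree_gate hT hP.1 c
  obtain ⟨j, rfl, hj⟩ := Walk.mem_support_iff_exists_getVert.mp hg
  have hga : T.dist (P.getVert j) a = j := by
    rw [SimpleGraph.dist_comm (u := P.getVert j) (v := a)]
    have := tree_dist_getVert hT hP.1 (Nat.zero_le j) hj
    simpa using this
  have hgb : T.dist (P.getVert j) b = L - j := by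
    have := tree_dist_getVert hT hP.1 hj (le_refl P.length)
    rw [P.getVert_length] at this
    exact this
  set t := T.dist c (P.getVert j) with htdef
  have ht1 : 1 ≤ t := by
    rcases Nat.eq_zero_or_pos t with h0 | h0
    · exfalso
      exact hcP (((hT.isConnected.dist_eq_zero_iff).mp h0) ▸ hg)
    · exact h0
  have hca : T.dist c a = t + j := by rw [hgate a P.start_mem_support, hga]
  have hcb : T.dist c b = t + (L - j) := by rw [hgate b P.end_mem_support, hgb]
  have cca : T.dist a c = T.dist c a := SimpleGraph.dist_comm ..
  have ccb : T.dist b c = T.dist c b := SimpleGraph.dist_comm ..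
  have hrbig : L - L/2 + 1 ≤ r := by omega
  -- the middle vertex of P
  set i0 := L - L/2 with hi0def
  have hi0L : i0 ≤ L := by omega
  have hmmem : P.getVert i0 ∈ P.support :=
    Walk.mem_support_iff_exists_getVert.mpr ⟨i0, rfl, hi0L⟩
  have key : ∀ x : V, T.dist x (P.getVert i0) ≤ i0 := by
    intro x
    obtain ⟨gx, hgx, hgatex⟩ := tree_gate hT hP.1 x
    obtain ⟨jx, rfl, hjx⟩ := Walk.mem_support_iff_exists_getVert.mp hgx
    have hgxa : T.dist (P.getVert jx) a = jx := by
      rw [SimpleGraph.dist_comm (u := P.getVert jx) (v := a)]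
      have := tree_dist_getVert hT hP.1 (Nat.zero_le jx) hjx
      simpa using this
    have hgxb : T.dist (P.getVert jx) b = L - jx := by
      have := tree_dist_getVert hT hP.1 hjx (le_refl P.length)
      rw [P.getVert_length] at this
      exact this
    have hxa : T.dist x a = T.dist x (P.getVert jx) + jx := by
      rw [hgatex a P.start_mem_support, hgxa]
    have hxb : T.dist x b = T.dist x (P.getVert jx) + (L - jx) := by
      rw [hgatex b P.end_mem_support, hgxb]
    have hxaL : T.dist x a ≤ L := by
      obtain ⟨q, hq, hqlen⟩ := exists_spath hT x a
      rw [← hqlen]; exact hP.2 _ _ q hq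
    have hxbL : T.dist x b ≤ L := by
      obtain ⟨q, hq, hqlen⟩ := exists_spath hT x b
      rw [← hqlen]; exact hP.2 _ _ q hq
    have hm := hgatex (P.getVert i0) hmmem
    rcases le_or_gt jx i0 with hle | hlt
    · have : T.dist (P.getVert jx) (P.getVert i0) = i0 - jx :=
        tree_dist_getVert hT hP.1 hle hi0L
      omega
    · have : T.dist (P.getVert i0) (P.getVert jx) = jx - i0 :=
        tree_dist_getVert hT hP.1 (le_of_lt hlt) hjx
      have hc2 : T.dist (P.getVert jx) (P.getVert i0) = jx - i0 := by
        rw [SimpleGraph.dist_comm (u := P.getVert jx) (v := P.getVert i0)]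
        omega
      omega
  -- the single-vertex walk at the middle beats r
  have hnilpath : (Walk.nil : T.Walk (P.getVert i0) (P.getVert i0)).IsPath :=
    Walk.IsPath.nil
  have hple : r ≤ eccW T (Walk.nil : T.Walk (P.getVert i0) (P.getVert i0)) :=
    pe_le _ hnilpath
  have hsmall : eccW T (Walk.nil : T.Walk (P.getVert i0) (P.getVert i0)) ≤ i0 := by
    apply Finset.sup_le
    intro x _
    calc walkDist T (Walk.nil : T.Walk (P.getVert i0) (P.getVert i0)) x
          ≤ T.dist x (P.getVert i0) :=
          walkDist_le _ (Walk.start_mem_support _)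
      _ ≤ i0 := key x
  omega

end Main

theorem stmt11 (T : SimpleGraph V) (hT : T.IsTree)
    {a b c d : V} (P : T.Walk a b) (hP : IsLongestPath T P)
    (Pstar : T.Walk c d) (hPstar : Pstar.IsPath)
    (hcentral : eccW T Pstar = pe T)
    (hmin : ∀ (e f : V) (Q : T.Walk e f), Q.IsPath → eccW T Q = pe T →
      Pstar.length ≤ Q.length) :
    ∀ v ∈ Pstar.support, v ∈ P.support := by
  intro v hv
  obtain ⟨p0, hp0, hd0⟩ := longest_central hT hP hPstar v
  rw [hcentral] at hd0
  by_cases hr : pe T = 0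
  · rw [hr] at hd0
    have hv0 : v = p0 := (hT.isConnected.dist_eq_zero_iff).mp (by omega)
    rw [hv0]
    exact hp0
  · have hr1 : 1 ≤ pe T := by omega
    by_cases hl : Pstar.length = 0
    · obtain ⟨i, rfl, hi⟩ := Walk.mem_support_iff_exists_getVert.mp hv
      have hi0 : i = 0 := by omega
      rw [hi0, Pstar.getVert_zero]
      exact center_mem hT hP hPstar hcentral hl hr1
    · have hd : d ∈ P.support := endpoint_mem hT hP hPstar hcentral hmin (by omega) hr1
      have hc : c ∈ P.support := by
        refine endpoint_mem hT hP (Ps := Pstar.reverse) hPstar.reverse ?_ ?_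
          (by rw [Walk.length_reverse]; omega) hr1
        · rw [eccW_reverse]; exact hcentral
        · intro e f Q hQ hQc
          rw [Walk.length_reverse]
          exact hmin e f Q hQ hQc
      exact tree_convex hT hPstar hP.1 hc hd v hv
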